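/- Let X be a connected, non-compact, locally connected, locally compact Hausdorff space and let K ⊆ X be a compact subspace. Define K̂ := X ∖ ⋃{U : U is an unbounded connected component of X∖K}. Then K̂ is compact. -/
import Mathlib


/-- Let `X` be a connected, non-compact, locally connected, locally compact
Hausdorff space and `K ⊆ X` a compact subspace.  Define
`K̂ := X \ ⋃ {U : U is an unbounded connected component of X \ K}` (a component is unbounded
if its closure in `X` is not compact).  Then `K̂` is compact. -/
theorem hatK_isCompact {X : Type*} [TopologicalSpace X]
    [ConnectedSpace X] [NoncompactSpace X] [LocallyConnectedSpace X] [LocallyCompactSpace X]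
    [T2Space X] {K : Set X} (hK : IsCompact K) :
    IsCompact
      (⋃₀ {U : Set X | (∃ x ∈ Kᶜ, U = connectedComponentIn Kᶜ x) ∧ ¬ IsCompact (closure U)})ᶜ := by
  classical
  set S : Set (Set X) :=
    {U : Set X | (∃ x ∈ Kᶜ, U = connectedComponentIn Kᶜ x) ∧ ¬ IsCompact (closure U)} with hS
  have hKc : IsOpen Kᶜ := hK.isClosed.isOpen_compl
  -- closedness of the complement
  have hclosed : IsClosed (⋃₀ S)ᶜ := by
    refine (isOpen_sUnion ?_).isClosed_compl
    rintro U ⟨⟨x, hx, rfl⟩, -⟩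
    exact hKc.connectedComponentIn
  -- a compact set L with K ∪ {x₀} ⊆ interior L
  obtain ⟨x₀⟩ : Nonempty X := inferInstance
  obtain ⟨L, hL, hKL⟩ := exists_compact_superset (hK.union isCompact_singleton (t := {x₀}))
  have hLclosed : IsClosed L := hL.isClosed
  have hKintL : K ⊆ interior L := (Set.union_subset_iff.mp hKL).1
  have hx₀L : x₀ ∈ L := interior_subset (hKL (Set.mem_union_right _ rfl))
  -- the frontier of L is compact and disjoint from K
  have hfr : IsCompact (frontier L) :=
    hL.of_isClosed_subset isClosed_frontier (by
      rw [frontier_eq_closure_inter_closure, hLclosed.closure_eq]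
      exact Set.inter_subset_left)
  have hfrK : frontier L ⊆ Kᶜ := fun z hz hzK => hz.2 (hKintL hzK)
  -- cover the frontier by finitely many components
  obtain ⟨t, hts, htcov⟩ := hfr.elim_nhds_subcover (fun y => connectedComponentIn Kᶜ y)
    (fun y hy => (hKc.connectedComponentIn).mem_nhds (mem_connectedComponentIn (hfrK hy)))
  set t' : Finset X := t.filter (fun y => IsCompact (closure (connectedComponentIn Kᶜ y))) with ht'
  -- the compact set containing K̂
  have hD : IsCompact (L ∪ ⋃ y ∈ t', closure (connectedComponentIn Kᶜ y)) := by
    refine hL.union (t'.finite_toSet.isCompact_biUnion ?_)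
    intro y hy
    exact (Finset.mem_filter.mp hy).2
  refine hD.of_isClosed_subset hclosed ?_
  intro y hy
  by_cases hyL : y ∈ L
  · exact Set.mem_union_left _ hyL
  -- y ∉ L, so y ∉ K; its component U is bounded
  have hyK : y ∈ Kᶜ := fun h => hyL (interior_subset (hKintL h))
  set U : Set X := connectedComponentIn Kᶜ y with hU
  have hyU : y ∈ U := mem_connectedComponentIn hyK
  have hUb : IsCompact (closure U) := by
    by_contra hnc
    exact hy (Set.mem_sUnion.mpr ⟨U, ⟨⟨y, hyK, rfl⟩, hnc⟩, hyU⟩)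
  -- closure U ⊆ U ∪ K
  have hclU : closure U ⊆ U ∪ K := by
    intro z hz
    by_cases hzK : z ∈ K
    · exact Or.inr hzK
    · left
      have hzc : z ∈ connectedComponentIn Kᶜ z := mem_connectedComponentIn hzK
      have : (connectedComponentIn Kᶜ z ∩ U).Nonempty := by
        rcases mem_closure_iff.mp hz _ (hKc.connectedComponentIn) hzc with ⟨w, hw⟩
        exact ⟨w, hw⟩
      obtain ⟨w, hw1, hw2⟩ := this
      have e1 := connectedComponentIn_eq hw1
      have e2 := connectedComponentIn_eq (show w ∈ connectedComponentIn Kᶜ y from hw2)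
      show z ∈ connectedComponentIn Kᶜ y
      rw [← e1.trans e2.symm]
      exact hzc
  -- U meets the frontier of L
  have hmeet : (U ∩ frontier L).Nonempty := by
    by_contra hdis
    rw [Set.not_nonempty_iff_eq_empty] at hdis
    -- U avoids frontier L, so U ⊆ interior L or U ⊆ Lᶜ; y ∉ L forces U ⊆ Lᶜ
    have hsub : U ⊆ interior L ∪ Lᶜ := by
      intro z hz
      by_cases hzL : z ∈ L
      · left
        by_contra hzi
        have h' : z ∈ U ∩ frontier L := ⟨hz, subset_closure hzL, hzi⟩
        rw [hdis] at h'
        exact h'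
      · exact Or.inr hzL
    have hpre : IsPreconnected U :=
      (isConnected_connectedComponentIn_iff.mpr hyK).isPreconnected
    have hULc : U ⊆ Lᶜ := by
      refine hpre.subset_left_of_subset_union (v := interior L) hLclosed.isOpen_compl isOpen_interior ?_ ?_ ⟨y, hyU, hyL⟩
      · exact Set.disjoint_left.mpr fun a ha ha' => ha (interior_subset ha')
      · intro z hz; rcases hsub hz with h | h
        · exact Or.inr h
        · exact Or.inl h
    -- then U is clopen, hence univ: contradiction with x₀ ∈ L
    have hUclosed : IsClosed U := by
      rw [← closure_eq_iff_isClosed]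
      refine subset_antisymm ?_ subset_closure
      intro z hz
      rcases hclU hz with h | h
      · exact h
      · exfalso
        have hz' : z ∈ (interior L)ᶜ := by
          rw [← closure_compl]; exact closure_mono hULc hz
        exact hz' (hKintL h)
    have : U = Set.univ := by
      rcases isClopen_iff.mp ⟨hUclosed, hKc.connectedComponentIn⟩ with h | h
      · exact absurd hyU (h ▸ Set.notMem_empty y)
      · exact h
    exact (hULc (this ▸ Set.mem_univ x₀)) hx₀L
  obtain ⟨z, hzU, hzfr⟩ := hmeet
  rcases Set.mem_iUnion₂.mp (htcov hzfr) with ⟨y₀, hy₀t, hzy₀⟩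
  have hUeq : connectedComponentIn Kᶜ y₀ = U := by
    have e1 := connectedComponentIn_eq hzy₀
    have e2 := connectedComponentIn_eq (show z ∈ connectedComponentIn Kᶜ y from hzU)
    exact e1.trans e2.symm
  have hy₀t' : y₀ ∈ t' := Finset.mem_filter.mpr ⟨hy₀t, by rw [hUeq]; exact hUb⟩
  exact Set.mem_union_right _ (Set.mem_biUnion hy₀t' (hUeq ▸ subset_closure hyU))
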